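/- Let a ∈ Δ_n^* and b ∈ Δ_m^* and let r ≥ 1. Then ⋃_{g ∈ Δ_r^*} Π_{a,g,b} = Π_{a,b}(r); that is, a matrix P ∈ ℝ_{≥0}^{n×m} belongs to Π_{a,b} and has nonnegative rank at most r if and only if there exist g ∈ Δ_r^*, Q ∈ Π_{a,g} and R ∈ Π_{b,g} such that P = Q Diag(1/g) Rᵀ. -/

import Mathlib

open Matrix Finset Real
open scoped RealInnerProductSpace

noncomputable section

/-- Real matrices indexed by `Fin n × Fin m`. -/
abbrev Mat (n m : ℕ) : Type := Matrix (Fin n) (Fin m) ℝ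

/-- Triples `(Q, R, g)` as in the low-rank OT factorization. -/
abbrev LRTriple (n m r : ℕ) : Type := Mat n r × Mat m r × (Fin r → ℝ)

/-- Pairs `(Q, R)` (fixed middle marginal `g`). -/
abbrev LRPair (n m r : ℕ) : Type := Mat n r × Mat m r

/-- The interior of the probability simplex Δ_n^*: strictly positive entries summing to 1. -/
def posSimplex (n : ℕ) : Set (Fin n → ℝ) := {a | (∀ i, 0 < a i) ∧ ∑ i, a i = 1}

/-- Frobenius inner product ⟨C, P⟩ = Σ_{ij} C_ij P_ij. -/
def frobInner {n m : ℕ} (C P : Mat n m) : ℝ := ∑ i, ∑ j, C i j * P i j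

/-- Entropy H(P) = −Σ_{ij} P_ij (log P_ij − 1) (with 0 log 0 = 0, as `Real.log 0 = 0`). -/
def matH {n m : ℕ} (P : Mat n m) : ℝ := -∑ i, ∑ j, P i j * (Real.log (P i j) - 1)

/-- Entropy of a vector. -/
def vecH {r : ℕ} (g : Fin r → ℝ) : ℝ := -∑ i, g i * (Real.log (g i) - 1)

/-- Kullback–Leibler divergence KL(P,Q) = Σ_{ij} P_ij (log(P_ij/Q_ij) − 1). -/
def matKL {n m : ℕ} (P Q : Mat n m) : ℝ := ∑ i, ∑ j, P i j * (Real.log (P i j / Q i j) - 1)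

/-- Kullback–Leibler divergence of vectors. -/
def vecKL {r : ℕ} (p q : Fin r → ℝ) : ℝ := ∑ i, p i * (Real.log (p i / q i) - 1)

/-- KL divergence on triples, summing over the three components. -/
def tripleKL {n m r : ℕ} (x y : LRTriple n m r) : ℝ :=
  matKL x.1 y.1 + matKL x.2.1 y.2.1 + vecKL x.2.2 y.2.2

/-- KL divergence on pairs, summing over the two components. -/
def pairKL {n m r : ℕ} (x y : LRPair n m r) : ℝ := matKL x.1 y.1 + matKL x.2 y.2

/-- Euclidean inner product on triples. -/
def tripleInner {n m r : ℕ} (x y : LRTriple n m r) : ℝ :=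
  frobInner x.1 y.1 + frobInner x.2.1 y.2.1 + ∑ i, x.2.2 i * y.2.2 i

/-- Euclidean inner product on pairs. -/
def pairInner {n m r : ℕ} (x y : LRPair n m r) : ℝ := frobInner x.1 y.1 + frobInner x.2 y.2

/-- Squared Euclidean norm of a triple (Frobenius on matrix blocks). -/
def tripleNormSq {n m r : ℕ} (x : LRTriple n m r) : ℝ :=
  (∑ i, ∑ j, (x.1 i j) ^ 2) + (∑ i, ∑ j, (x.2.1 i j) ^ 2) + ∑ i, (x.2.2 i) ^ 2

/-- Squared Euclidean norm of a pair (Frobenius on matrix blocks). -/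
def pairNormSq {n m r : ℕ} (x : LRPair n m r) : ℝ :=
  (∑ i, ∑ j, (x.1 i j) ^ 2) + (∑ i, ∑ j, (x.2 i j) ^ 2)

/-- The transport polytope Π_{a,b} of couplings with marginals `a` and `b`. -/
def couplings {n m : ℕ} (a : Fin n → ℝ) (b : Fin m → ℝ) : Set (Mat n m) :=
  {P | (∀ i j, 0 ≤ P i j) ∧ (∀ i, ∑ j, P i j = a i) ∧ (∀ j, ∑ i, P i j = b j)}

/-- The nonnegative rank: smallest `q` such that `M` is a sum of `q` nonnegative
rank-one matrices. -/
def nonnegRank {n m : ℕ} (M : Mat n m) : ℕ :=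
  sInf {q : ℕ | ∃ f : Fin q → Mat n m,
    (∀ i, (f i).rank = 1 ∧ ∀ k l, 0 ≤ f i k l) ∧ M = ∑ i, f i}

/-- Π_{a,b}(r): couplings with nonnegative rank at most `r`. -/
def couplingsRank {n m : ℕ} (a : Fin n → ℝ) (b : Fin m → ℝ) (r : ℕ) : Set (Mat n m) :=
  {P | P ∈ couplings a b ∧ nonnegRank P ≤ r}

/-- 𝒞₁(a,b,r): `Q, R` nonnegative with row sums `a`, `b`, and `g > 0`. -/
def C1set {n m : ℕ} (a : Fin n → ℝ) (b : Fin m → ℝ) (r : ℕ) : Set (LRTriple n m r) :=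
  {x | (∀ i j, 0 ≤ x.1 i j) ∧ (∀ i j, 0 ≤ x.2.1 i j) ∧ (∀ i, 0 < x.2.2 i) ∧
    (∀ i, ∑ j, x.1 i j = a i) ∧ (∀ i, ∑ j, x.2.1 i j = b i)}

/-- The closure of 𝒞₁(a,b,r): as 𝒞₁ but only `g ≥ 0`. -/
def C1barSet {n m : ℕ} (a : Fin n → ℝ) (b : Fin m → ℝ) (r : ℕ) : Set (LRTriple n m r) :=
  {x | (∀ i j, 0 ≤ x.1 i j) ∧ (∀ i j, 0 ≤ x.2.1 i j) ∧ (∀ i, 0 ≤ x.2.2 i) ∧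
    (∀ i, ∑ j, x.1 i j = a i) ∧ (∀ i, ∑ j, x.2.1 i j = b i)}

/-- 𝒞₁(a,b,r,α): as 𝒞₁ but with the lower bound `g ≥ α`. -/
def C1setAlpha {n m : ℕ} (a : Fin n → ℝ) (b : Fin m → ℝ) (r : ℕ) (α : ℝ) :
    Set (LRTriple n m r) :=
  {x | (∀ i j, 0 ≤ x.1 i j) ∧ (∀ i j, 0 ≤ x.2.1 i j) ∧ (∀ i, α ≤ x.2.2 i) ∧
    (∀ i, ∑ j, x.1 i j = a i) ∧ (∀ i, ∑ j, x.2.1 i j = b i)}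

/-- 𝒞₂(r): `Q, R, g` nonnegative with both column sums equal to `g`. -/
def C2set {n m : ℕ} (r : ℕ) : Set (LRTriple n m r) :=
  {x | (∀ i j, 0 ≤ x.1 i j) ∧ (∀ i j, 0 ≤ x.2.1 i j) ∧ (∀ i, 0 ≤ x.2.2 i) ∧
    (∀ j, ∑ i, x.1 i j = x.2.2 j) ∧ (∀ j, ∑ i, x.2.1 i j = x.2.2 j)}

/-- 𝒞(a,b,r) = 𝒞₁(a,b,r) ∩ 𝒞₂(r). -/
def Cset {n m : ℕ} (a : Fin n → ℝ) (b : Fin m → ℝ) (r : ℕ) : Set (LRTriple n m r) :=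
  C1set a b r ∩ C2set r

/-- 𝒞(a,b,r,α) = 𝒞₁(a,b,r,α) ∩ 𝒞₂(r). -/
def CsetAlpha {n m : ℕ} (a : Fin n → ℝ) (b : Fin m → ℝ) (r : ℕ) (α : ℝ) :
    Set (LRTriple n m r) :=
  C1setAlpha a b r α ∩ C2set r

/-- F_ε(Q,R,g) = ⟨C, Q Diag(1/g) Rᵀ⟩ − ε H((Q,R,g)). -/
def Fobj {n m r : ℕ} (C : Mat n m) (ε : ℝ) (x : LRTriple n m r) : ℝ :=
  frobInner C (x.1 * Matrix.diagonal (fun i => (x.2.2 i)⁻¹) * x.2.1ᵀ) -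
    ε * (matH x.1 + matH x.2.1 + vecH x.2.2)

/-- LOT_{r,ε} = inf of F_ε over 𝒞(a,b,r). -/
def LOTre {n m : ℕ} (a : Fin n → ℝ) (b : Fin m → ℝ) (C : Mat n m) (ε : ℝ) (r : ℕ) : ℝ :=
  sInf (Fobj C ε '' Cset a b r)

/-- LOT_{r,ε,α} = inf of F_ε over 𝒞(a,b,r,α). -/
def LOTreAlpha {n m : ℕ} (a : Fin n → ℝ) (b : Fin m → ℝ) (C : Mat n m) (ε : ℝ) (r : ℕ)
    (α : ℝ) : ℝ :=
  sInf (Fobj C ε '' CsetAlpha a b r α)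

/-- Spectral norm (ℓ²→ℓ² operator norm) of a matrix. -/
def specNorm {n m : ℕ} (C : Mat n m) : ℝ :=
  ‖LinearMap.toContinuousLinearMap (Matrix.toEuclideanLin C)‖

/-- The gradient ∇F_ε(Q,R,g) =
(C R Diag(1/g) + ε log Q, Cᵀ Q Diag(1/g) + ε log R, −𝒟(Qᵀ C R)/g² + ε log g). -/
def gradF {n m r : ℕ} (C : Mat n m) (ε : ℝ) (x : LRTriple n m r) : LRTriple n m r :=
  (Matrix.of fun i k => (C * x.2.1) i k * (x.2.2 k)⁻¹ + ε * Real.log (x.1 i k),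
   Matrix.of fun j k => (Cᵀ * x.1) j k * (x.2.2 k)⁻¹ + ε * Real.log (x.2.1 j k),
   fun k => -((x.1ᵀ * C * x.2.1) k k) / (x.2.2 k) ^ 2 + ε * Real.log (x.2.2 k))

/-- Entrywise logarithm of a triple. -/
def logTriple {n m r : ℕ} (x : LRTriple n m r) : LRTriple n m r :=
  (Matrix.of fun i k => Real.log (x.1 i k), Matrix.of fun j k => Real.log (x.2.1 j k),
   fun k => Real.log (x.2.2 k))

/-- The feasible set Π_{a,g} × Π_{b,g}. -/
def pairFeasible {n m r : ℕ} (a : Fin n → ℝ) (b : Fin m → ℝ) (g : Fin r → ℝ) :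
    Set (LRPair n m r) :=
  {u | u.1 ∈ couplings a g ∧ u.2 ∈ couplings b g}

/-- f_ε(Q,R) = ⟨C, Q Diag(1/g) Rᵀ⟩ − ε (H(Q) + H(R)) for fixed `g`. -/
def fobj {n m r : ℕ} (C : Mat n m) (g : Fin r → ℝ) (ε : ℝ) (x : LRPair n m r) : ℝ :=
  frobInner C (x.1 * Matrix.diagonal (fun i => (g i)⁻¹) * x.2ᵀ) - ε * (matH x.1 + matH x.2)

/-- LOT_{r,g,ε} = inf of f_ε over Π_{a,g} × Π_{b,g}. -/
def LOTfix {n m r : ℕ} (a : Fin n → ℝ) (b : Fin m → ℝ) (g : Fin r → ℝ) (C : Mat n m)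
    (ε : ℝ) : ℝ :=
  sInf (fobj C g ε '' pairFeasible a b g)

/-- The gradient ∇f_ε(Q,R) = (C R Diag(1/g) + ε log Q, Cᵀ Q Diag(1/g) + ε log R). -/
def gradf {n m r : ℕ} (C : Mat n m) (g : Fin r → ℝ) (ε : ℝ) (x : LRPair n m r) :
    LRPair n m r :=
  (Matrix.of fun i k => (C * x.2) i k * (g k)⁻¹ + ε * Real.log (x.1 i k),
   Matrix.of fun j k => (Cᵀ * x.1) j k * (g k)⁻¹ + ε * Real.log (x.2 j k))

/-- Entrywise logarithm of a pair. -/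
def logPair {n m r : ℕ} (x : LRPair n m r) : LRPair n m r :=
  (Matrix.of fun i k => Real.log (x.1 i k), Matrix.of fun j k => Real.log (x.2 j k))

end

namespace LowRankAux

lemma exists_pos_of_sum_pos {α : Type*} (s : Finset α) (f : α → ℝ)
    (h0 : ∀ i ∈ s, 0 ≤ f i) (h : 0 < ∑ i ∈ s, f i) : ∃ i ∈ s, 0 < f i := by
  by_contra hc
  push_neg at hc
  have : ∑ i ∈ s, f i ≤ 0 := Finset.sum_nonpos fun i hi => hc i hi
  linarith

lemma matrix_ne_zero_entry {n m : ℕ} (M : Mat n m) (h : M ≠ 0) :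
    ∃ i j, M i j ≠ 0 := by
  by_contra hc
  push_neg at hc
  exact h (by ext i j; simpa using hc i j)

lemma rank_eq_one_of_outer {n m : ℕ} (M : Mat n m) (u : Fin n → ℝ) (v : Fin m → ℝ)
    (hM : ∀ i j, M i j = u i * v j) (i0 : Fin n) (j0 : Fin m) (h0 : M i0 j0 ≠ 0) :
    M.rank = 1 := by
  have hv0 : v j0 ≠ 0 := by intro h; apply h0; rw [hM]; simp [h]
  have hcol : (M *ᵥ Pi.single j0 1) ∈ LinearMap.range M.mulVecLin :=
    ⟨Pi.single j0 1, rfl⟩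
  rw [Matrix.rank]
  refine finrank_eq_one (⟨M *ᵥ Pi.single j0 1, hcol⟩ : ↥(LinearMap.range M.mulVecLin)) ?_ ?_
  · intro h
    have h2 : (M *ᵥ Pi.single j0 1) i0 = 0 := by
      have := congrArg (fun w : ↥(LinearMap.range M.mulVecLin) => (w : Fin n → ℝ) i0) h
      simpa using this
    rw [Matrix.mulVec_single] at h2
    simp at h2
    exact h0 h2
  · rintro ⟨w, x, hx⟩
    refine ⟨(∑ j, v j * x j) / (v j0), ?_⟩
    apply Subtype.ext
    show ((∑ j, v j * x j) / (v j0)) • (M *ᵥ Pi.single j0 1) = w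
    rw [← hx]
    ext i
    show ((∑ j, v j * x j) / (v j0)) * ((M *ᵥ Pi.single j0 1) i) = (M *ᵥ x) i
    rw [show (M *ᵥ Pi.single j0 1) i = M i j0 by rw [Matrix.mulVec_single]; simp]
    simp only [Matrix.mulVec, dotProduct]
    have hl : ∀ j, M i j * x j = u i * (v j * x j) := fun j => by rw [hM]; ring
    rw [Finset.sum_congr rfl fun j _ => hl j, ← Finset.mul_sum, hM]
    field_simp

lemma rank_one_outer {n m : ℕ} (M : Mat n m) (h : M.rank = 1) :
    ∃ u : Fin n → ℝ, ∃ v : Fin m → ℝ, ∀ i j, M i j = u i * v j := by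
  rw [Matrix.rank] at h
  obtain ⟨v0, hv0, hspan⟩ := finrank_eq_one_iff'.mp h
  choose c hc using fun j : Fin m =>
    hspan ⟨M *ᵥ Pi.single j 1, ⟨Pi.single j 1, rfl⟩⟩
  refine ⟨(v0 : Fin n → ℝ), c, fun i j => ?_⟩
  have h2 := congrArg (fun w : ↥(LinearMap.range M.mulVecLin) => (w : Fin n → ℝ) i) (hc j)
  simp [Matrix.mulVec_single] at h2
  rw [← h2]; ring

end LowRankAux

namespace LowRankAux

lemma pad {n m : ℕ} (P : Mat n m) (q : ℕ) (hq : 1 ≤ q)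
    (h : ∃ f : Fin q → Mat n m, (∀ i, (f i).rank = 1 ∧ ∀ k l, 0 ≤ f i k l) ∧ P = ∑ i, f i) :
    ∃ f : Fin (q+1) → Mat n m, (∀ i, (f i).rank = 1 ∧ ∀ k l, 0 ≤ f i k l) ∧ P = ∑ i, f i := by
  obtain ⟨f, hf, hsum⟩ := h
  set i0 : Fin q := ⟨0, hq⟩ with hi0
  have hhalf : ∀ M : Mat n m, M.rank = 1 → (∀ k l, 0 ≤ M k l) →
      (((1:ℝ)/2) • M).rank = 1 ∧ ∀ k l, 0 ≤ (((1:ℝ)/2) • M) k l := by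
    intro M hM hMpos
    obtain ⟨u, v, huv⟩ := rank_one_outer M hM
    have hne : M ≠ 0 := by
      intro h0
      rw [h0, Matrix.rank_zero] at hM
      exact absurd hM (by norm_num)
    obtain ⟨i1, j1, hij⟩ := matrix_ne_zero_entry M hne
    constructor
    · refine rank_eq_one_of_outer _ (fun i => (1/2 : ℝ) * u i) v (fun i j => ?_) i1 j1 ?_
      · show (1/2 : ℝ) * M i j = _
        rw [huv]; ring
      · show (1/2 : ℝ) * M i1 j1 ≠ 0
        simpa using hij
    · intro k l
      show 0 ≤ (1/2 : ℝ) * M k l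
      have := hMpos k l; linarith
  obtain ⟨hr1, hr2⟩ := hhalf (f i0) (hf i0).1 (hf i0).2
  refine ⟨Fin.cons (((1:ℝ)/2) • f i0) (Function.update f i0 (((1:ℝ)/2) • f i0)), ?_, ?_⟩
  · intro k
    refine Fin.cases ⟨hr1, hr2⟩ (fun k => ?_) k
    by_cases hk : k = i0
    · simpa [hk] using And.intro hr1 hr2
    · simpa [Function.update_of_ne hk] using hf k
  · rw [Fin.sum_cons, Finset.sum_update_of_mem (Finset.mem_univ i0), hsum,
      ← Finset.sum_erase_add _ f (Finset.mem_univ i0), Finset.sdiff_singleton_eq_erase]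
    have : ((1:ℝ)/2) • f i0 + ((1:ℝ)/2) • f i0 = f i0 := by
      rw [← add_smul]; norm_num
    rw [← add_assoc, this]
    abel

end LowRankAux

/-- ⋃_{g ∈ Δ_r^*} Π_{a,g,b} = Π_{a,b}(r): a nonnegative matrix `P` is a
coupling of `(a, b)` with nonnegative rank at most `r` iff it factors as
`P = Q Diag(1/g) Rᵀ` with `g ∈ Δ_r^*`, `Q ∈ Π_{a,g}`, `R ∈ Π_{b,g}`. -/
theorem low_rank_coupling_factorization {n m : ℕ} (r : ℕ) (hr : 1 ≤ r)
    (a : Fin n → ℝ) (ha : a ∈ posSimplex n)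
    (b : Fin m → ℝ) (hb : b ∈ posSimplex m)
    (P : Mat n m) :
    P ∈ couplingsRank a b r ↔
      ∃ g : Fin r → ℝ, g ∈ posSimplex r ∧
        ∃ Q ∈ couplings a g, ∃ R ∈ couplings b g,
          P = Q * Matrix.diagonal (fun i => (g i)⁻¹) * Rᵀ := by
  classical
  obtain ⟨hapos, hasum⟩ := ha
  obtain ⟨hbpos, hbsum⟩ := hb
  constructor
  · rintro ⟨⟨hPpos, hProw, hPcol⟩, hrank⟩
    have hn : n ≠ 0 := by rintro rfl; simpa using hasum
    set S : Set ℕ := {q : ℕ | ∃ f : Fin q → Mat n m,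
      (∀ i, (f i).rank = 1 ∧ ∀ k l, 0 ≤ f i k l) ∧ P = ∑ i, f i} with hS
    have hnS : n ∈ S := by
      refine ⟨fun i => Matrix.of fun k l => (if k = i then (1:ℝ) else 0) * P i l, ?_, ?_⟩
      · intro i
        constructor
        · have hpos : 0 < ∑ l, P i l := by rw [hProw]; exact hapos i
          obtain ⟨l0, _, hl0⟩ :=
            LowRankAux.exists_pos_of_sum_pos _ _ (fun l _ => hPpos i l) hpos
          refine LowRankAux.rank_eq_one_of_outer _
            (fun k => if k = i then (1:ℝ) else 0) (fun l => P i l)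
            (fun k l => rfl) i l0 ?_
          show (if i = i then (1:ℝ) else 0) * P i l0 ≠ 0
          simpa using ne_of_gt hl0
        · intro k l
          show 0 ≤ (if k = i then (1:ℝ) else 0) * P i l
          by_cases h : k = i <;> simp [h, hPpos i l]
      · ext k l
        rw [Matrix.sum_apply]
        simp only [Matrix.of_apply, ite_mul, one_mul, zero_mul]
        rw [Finset.sum_ite_eq univ k (fun i => P i l)]
        simp
    have hSne : S.Nonempty := ⟨n, hnS⟩
    have hqmem : sInf S ∈ S := Nat.sInf_mem hSne
    have hqr : sInf S ≤ r := hrank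
    have hq1 : 1 ≤ sInf S := by
      rcases Nat.eq_zero_or_pos (sInf S) with h0 | h1
      · exfalso
        rw [h0] at hqmem
        obtain ⟨f, _, hsum⟩ := hqmem
        have i0 : Fin n := ⟨0, Nat.pos_of_ne_zero hn⟩
        have : a i0 = 0 := by
          rw [← hProw i0, hsum]
          simp
        exact absurd this (ne_of_gt (hapos i0))
      · exact h1
    have hrS : r ∈ S := by
      have hall : ∀ k, sInf S ≤ k → k ∈ S := by
        intro k hk
        induction k, hk using Nat.le_induction with
        | base => exact hqmem
        | succ k hk ih => exact LowRankAux.pad P k (le_trans hq1 hk) ih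
      exact hall r hqr
    obtain ⟨f, hf, hsum⟩ := hrS
    have hPe : ∀ i j, P i j = ∑ k, f k i j := by
      intro i j; rw [hsum, Matrix.sum_apply]
    set t : Fin r → ℝ := fun k => ∑ i, ∑ j, f k i j with ht
    have htpos : ∀ k, 0 < t k := by
      intro k
      have hne : f k ≠ 0 := by
        intro h0
        have h1 := (hf k).1
        rw [h0, Matrix.rank_zero] at h1
        exact absurd h1 (by norm_num)
      obtain ⟨i1, j1, h1⟩ := LowRankAux.matrix_ne_zero_entry _ hne
      have h1' : 0 < f k i1 j1 := lt_of_le_of_ne ((hf k).2 i1 j1) (Ne.symm h1)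
      refine Finset.sum_pos' (fun i _ => Finset.sum_nonneg fun j _ => (hf k).2 i j)
        ⟨i1, Finset.mem_univ i1, Finset.sum_pos' (fun j _ => (hf k).2 i1 j)
          ⟨j1, Finset.mem_univ j1, h1'⟩⟩
    have htsum : ∑ k, t k = 1 := by
      calc ∑ k, t k = ∑ i, ∑ k, ∑ j, f k i j := Finset.sum_comm
        _ = ∑ i, ∑ j, ∑ k, f k i j := by
              exact Finset.sum_congr rfl fun i _ => Finset.sum_comm
        _ = ∑ i, ∑ j, P i j := by
              refine Finset.sum_congr rfl fun i _ => Finset.sum_congr rfl fun j _ => ?_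
              rw [hPe]
        _ = ∑ i, a i := Finset.sum_congr rfl fun i _ => hProw i
        _ = 1 := hasum
    refine ⟨t, ⟨htpos, htsum⟩,
      Matrix.of (fun i k => ∑ j, f k i j), ⟨?_, ?_, ?_⟩,
      Matrix.of (fun j k => ∑ i, f k i j), ⟨?_, ?_, ?_⟩, ?_⟩
    · intro i k
      show (0:ℝ) ≤ ∑ j, f k i j
      exact Finset.sum_nonneg fun j _ => (hf k).2 i j
    · intro i
      calc ∑ k, ∑ j, f k i j = ∑ j, ∑ k, f k i j := Finset.sum_comm
        _ = ∑ j, P i j := Finset.sum_congr rfl fun j _ => (hPe i j).symm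
        _ = a i := hProw i
    · intro k
      show (∑ i, ∑ j, f k i j) = t k
      rfl
    · intro j k
      show (0:ℝ) ≤ ∑ i, f k i j
      exact Finset.sum_nonneg fun i _ => (hf k).2 i j
    · intro j
      calc ∑ k, ∑ i, f k i j = ∑ i, ∑ k, f k i j := Finset.sum_comm
        _ = ∑ i, P i j := Finset.sum_congr rfl fun i _ => (hPe i j).symm
        _ = b j := hPcol j
    · intro k
      show (∑ j, ∑ i, f k i j) = t k
      exact Finset.sum_comm
    · ext i j
      rw [Matrix.mul_apply, hPe i j]
      refine Finset.sum_congr rfl fun k _ => ?_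
      rw [Matrix.mul_diagonal, Matrix.transpose_apply]
      simp only [Matrix.of_apply]
      obtain ⟨u, v, huv⟩ := LowRankAux.rank_one_outer _ (hf k).1
      have htk : t k = (∑ i, u i) * (∑ j, v j) := by
        rw [ht]
        simp only [huv]
        rw [Finset.sum_mul]
        exact Finset.sum_congr rfl fun i _ => by rw [Finset.mul_sum]
      have htne : t k ≠ 0 := ne_of_gt (htpos k)
      have hQ : ∑ j', f k i j' = u i * ∑ j', v j' := by
        rw [Finset.mul_sum]; exact Finset.sum_congr rfl fun j' _ => huv i j'
      have hR : ∑ i', f k i' j = (∑ i', u i') * v j := by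
        rw [Finset.sum_mul]; exact Finset.sum_congr rfl fun i' _ => huv i' j
      rw [hQ, hR, huv i j]
      rw [htk] at htne ⊢
      have hu := left_ne_zero_of_mul htne
      have hv := right_ne_zero_of_mul htne
      field_simp
  · rintro ⟨g, ⟨hgpos, hgsum⟩, Q, ⟨hQpos, hQrow, hQcol⟩, R, ⟨hRpos, hRrow, hRcol⟩, hP⟩
    have hPentry : ∀ i j, P i j = ∑ k, Q i k * (g k)⁻¹ * R j k := by
      intro i j
      rw [hP, Matrix.mul_apply]
      refine Finset.sum_congr rfl fun k _ => ?_
      rw [Matrix.mul_diagonal, Matrix.transpose_apply]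
    have hterm : ∀ i j k, 0 ≤ Q i k * (g k)⁻¹ * R j k := by
      intro i j k
      have := hgpos k
      have h1 := hQpos i k
      have h2 := hRpos j k
      positivity
    refine ⟨⟨fun i j => ?_, fun i => ?_, fun j => ?_⟩, ?_⟩
    · rw [hPentry]
      exact Finset.sum_nonneg fun k _ => hterm i j k
    · calc ∑ j, P i j = ∑ j, ∑ k, Q i k * (g k)⁻¹ * R j k := by
            exact Finset.sum_congr rfl fun j _ => hPentry i j
        _ = ∑ k, ∑ j, Q i k * (g k)⁻¹ * R j k := Finset.sum_comm
        _ = ∑ k, Q i k := by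
            refine Finset.sum_congr rfl fun k _ => ?_
            rw [← Finset.mul_sum, hRcol k]
            field_simp [ne_of_gt (hgpos k)]
        _ = a i := hQrow i
    · calc ∑ i, P i j = ∑ i, ∑ k, Q i k * (g k)⁻¹ * R j k := by
            exact Finset.sum_congr rfl fun i _ => hPentry i j
        _ = ∑ k, ∑ i, Q i k * (g k)⁻¹ * R j k := Finset.sum_comm
        _ = ∑ k, R j k := by
            refine Finset.sum_congr rfl fun k _ => ?_
            have : ∑ i, Q i k * (g k)⁻¹ * R j k = (∑ i, Q i k) * ((g k)⁻¹ * R j k) := by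
              rw [Finset.sum_mul]
              exact Finset.sum_congr rfl fun i _ => by ring
            rw [this, hQcol k]
            field_simp [ne_of_gt (hgpos k)]
        _ = b j := hRrow j
    · apply Nat.sInf_le
      refine ⟨fun k => Matrix.of fun i j => Q i k * (g k)⁻¹ * R j k, fun k => ⟨?_, ?_⟩, ?_⟩
      · obtain ⟨i1, _, hi1⟩ := LowRankAux.exists_pos_of_sum_pos univ (fun i => Q i k)
          (fun i _ => hQpos i k) (by rw [hQcol k]; exact hgpos k)
        obtain ⟨j1, _, hj1⟩ := LowRankAux.exists_pos_of_sum_pos univ (fun j => R j k)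
          (fun j _ => hRpos j k) (by rw [hRcol k]; exact hgpos k)
        refine LowRankAux.rank_eq_one_of_outer _
          (fun i => Q i k * (g k)⁻¹) (fun j => R j k) (fun i j => rfl) i1 j1 ?_
        show Q i1 k * (g k)⁻¹ * R j1 k ≠ 0
        have := hgpos k
        positivity
      · intro i j; exact hterm i j k
      · ext i j
        rw [Matrix.sum_apply, hPentry i j]
        rfl
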